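/- arXiv:1903.08852 — 3 statements merged into one kernel-verified Lean document; each statement's English description precedes it below -/
import Mathlib

section
/- Let $\beta > 0$, $0 < \epsilon_0 < 1$, and suppose $\lambda \geq \frac{\epsilon_0}{(1-\epsilon_0)^2} + \left(\frac{\epsilon_0^2}{(1-\epsilon_0)^4} - 2\ln(1-\epsilon_0)\frac{\epsilon_0}{(1-\epsilon_0)^2}\right)^{1/2}$. Then the function $G(c) = \sqrt{\lambda c - c\ln(1-\beta c)}$ is concave on the set of $c > 0$ with $\beta c \leq \epsilon_0$, i.e., $G''(c) \leq 0$ for all such $c$. -/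
theorem aux_div_nonpos (a b s : ℝ) (hs : 0 < s) (h : 2 * s ^ 2 * a ≤ b ^ 2) :
    (a * (2 * s) - b * (2 * (b / (2 * s)))) / (2 * s) ^ 2 ≤ 0 := by
  have e : a * (2 * s) - b * (2 * (b / (2 * s))) = (2 * s ^ 2 * a - b ^ 2) / s := by
    field_simp
  apply div_nonpos_of_nonpos_of_nonneg
  · rw [e]
    exact div_nonpos_of_nonpos_of_nonneg (by linarith) hs.le
  · positivity

theorem stmt_2 (β ε₀ lam : ℝ) (hβ : 0 < β) (hε : 0 < ε₀) (hε1 : ε₀ < 1)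
    (hlam : lam ≥ ε₀ / (1 - ε₀) ^ 2 +
      Real.sqrt (ε₀ ^ 2 / (1 - ε₀) ^ 4 - 2 * Real.log (1 - ε₀) * (ε₀ / (1 - ε₀) ^ 2)))
    (c : ℝ) (hc : 0 < c) (hcε : β * c ≤ ε₀) :
    deriv (deriv (fun x : ℝ => Real.sqrt (lam * x - x * Real.log (1 - β * x)))) c ≤ 0 := by
  have hε1' : 0 < 1 - ε₀ := by linarith
  -- lam ≥ 2 * ε₀/(1-ε₀)^2 and lam > 0
  have hB0 : 0 < ε₀ / (1 - ε₀) ^ 2 := by positivity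
  have hlog0 : Real.log (1 - ε₀) ≤ 0 := Real.log_nonpos (by linarith) (by linarith)
  have hsq : ε₀ / (1 - ε₀) ^ 2 ≤
      Real.sqrt (ε₀ ^ 2 / (1 - ε₀) ^ 4 - 2 * Real.log (1 - ε₀) * (ε₀ / (1 - ε₀) ^ 2)) := by
    have h2 : (ε₀ / (1 - ε₀) ^ 2) ^ 2 ≤
        ε₀ ^ 2 / (1 - ε₀) ^ 4 - 2 * Real.log (1 - ε₀) * (ε₀ / (1 - ε₀) ^ 2) := by
      have he : (ε₀ / (1 - ε₀) ^ 2) ^ 2 = ε₀ ^ 2 / (1 - ε₀) ^ 4 := by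
        field_simp
      nlinarith [mul_nonneg (neg_nonneg.2 hlog0) hB0.le]
    calc ε₀ / (1 - ε₀) ^ 2 = Real.sqrt ((ε₀ / (1 - ε₀) ^ 2) ^ 2) := (Real.sqrt_sq hB0.le).symm
      _ ≤ _ := Real.sqrt_le_sqrt h2
  have hlam2 : 2 * (ε₀ / (1 - ε₀) ^ 2) ≤ lam := by linarith
  have hlam0 : 0 < lam := by linarith
  -- the open set
  set S : Set ℝ := Set.Ioo (0:ℝ) (1/β) with hS
  have hSopen : IsOpen S := isOpen_Ioo
  have hcS : c ∈ S := by
    constructor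
    · exact hc
    · rw [lt_div_iff₀ hβ]; nlinarith
  have hmem : ∀ x ∈ S, 0 < 1 - β * x ∧ 0 < lam * x - x * Real.log (1 - β * x) := by
    intro x hx
    obtain ⟨hx0, hx1⟩ := hx
    have hux : 0 < 1 - β * x := by
      rw [sub_pos]
      calc β * x < β * (1/β) := by exact mul_lt_mul_of_pos_left hx1 hβ
        _ = 1 := by field_simp
    refine ⟨hux, ?_⟩
    have hlx : Real.log (1 - β * x) ≤ 0 :=
      Real.log_nonpos hux.le (by nlinarith [mul_pos hβ hx0])
    nlinarith [mul_pos hlam0 hx0, mul_nonneg hx0.le (neg_nonneg.2 hlx)]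
  -- derivative of F
  have hF : ∀ x ∈ S, HasDerivAt (fun y : ℝ => lam * y - y * Real.log (1 - β * y))
      (lam - Real.log (1 - β * x) + β * x / (1 - β * x)) x := by
    intro x hx
    have hux : 0 < 1 - β * x := (hmem x hx).1
    have h1 : HasDerivAt (fun y : ℝ => 1 - β * y) (-β) x := by
      simpa using ((hasDerivAt_id x).const_mul β).const_sub 1
    have h2 : HasDerivAt (fun y : ℝ => Real.log (1 - β * y)) (-β / (1 - β * x)) x :=
      h1.log hux.ne'
    have h3 : HasDerivAt (fun y : ℝ => y * Real.log (1 - β * y))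
        (1 * Real.log (1 - β * x) + x * (-β / (1 - β * x))) x := (hasDerivAt_id x).mul h2
    have h4 : HasDerivAt (fun y : ℝ => lam * y) lam x := by
      simpa using (hasDerivAt_id x).const_mul lam
    have h5 : HasDerivAt (fun y : ℝ => lam * y - y * Real.log (1 - β * y)) _ x := h4.sub h3
    convert h5 using 1
    ring
  -- first derivative of G on S
  have hG : ∀ x ∈ S, HasDerivAt (fun y : ℝ => Real.sqrt (lam * y - y * Real.log (1 - β * y)))
      ((lam - Real.log (1 - β * x) + β * x / (1 - β * x)) /
        (2 * Real.sqrt (lam * x - x * Real.log (1 - β * x)))) x := by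
    intro x hx
    exact (hF x hx).sqrt (hmem x hx).2.ne'
  have hev : deriv (fun y : ℝ => Real.sqrt (lam * y - y * Real.log (1 - β * y))) =ᶠ[nhds c]
      fun x => (lam - Real.log (1 - β * x) + β * x / (1 - β * x)) /
        (2 * Real.sqrt (lam * x - x * Real.log (1 - β * x))) := by
    filter_upwards [hSopen.mem_nhds hcS] with x hx
    exact (hG x hx).deriv
  rw [hev.deriv_eq]
  -- second derivative at c
  have huc : 0 < 1 - β * c := (hmem c hcS).1
  have hFc : 0 < lam * c - c * Real.log (1 - β * c) := (hmem c hcS).2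
  have hsqc : 0 < Real.sqrt (lam * c - c * Real.log (1 - β * c)) := Real.sqrt_pos.2 hFc
  have hN : HasDerivAt (fun x : ℝ => lam - Real.log (1 - β * x) + β * x / (1 - β * x))
      (β / (1 - β * c) + β / (1 - β * c) ^ 2) c := by
    have h1 : HasDerivAt (fun y : ℝ => 1 - β * y) (-β) c := by
      simpa using ((hasDerivAt_id c).const_mul β).const_sub 1
    have h2 : HasDerivAt (fun y : ℝ => Real.log (1 - β * y)) (-β / (1 - β * c)) c :=
      h1.log huc.ne'
    have h2' : HasDerivAt (fun y : ℝ => lam - Real.log (1 - β * y)) (-(-β / (1 - β * c))) c :=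
      h2.const_sub lam
    have h5 : HasDerivAt (fun y : ℝ => β * y) β c := by
      simpa using (hasDerivAt_id c).const_mul β
    have h6 : HasDerivAt (fun y : ℝ => β * y / (1 - β * y))
        ((β * (1 - β * c) - β * c * (-β)) / (1 - β * c) ^ 2) c := h5.div h1 huc.ne'
    have h7 : HasDerivAt (fun y : ℝ => lam - Real.log (1 - β * y) + β * y / (1 - β * y)) _ c :=
      h2'.add h6
    convert h7 using 1
    rw [div_add_div _ _ huc.ne' (by positivity : (1 - β * c)^2 ≠ 0)]
    field_simp
    ring
  have hD : HasDerivAt (fun x : ℝ => 2 * Real.sqrt (lam * x - x * Real.log (1 - β * x)))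
      (2 * ((lam - Real.log (1 - β * c) + β * c / (1 - β * c)) /
        (2 * Real.sqrt (lam * c - c * Real.log (1 - β * c))))) c :=
    ((hF c hcS).sqrt hFc.ne').const_mul 2
  have hQ : HasDerivAt (fun x : ℝ => (lam - Real.log (1 - β * x) + β * x / (1 - β * x)) /
    (2 * Real.sqrt (lam * x - x * Real.log (1 - β * x)))) _ c := hN.div hD (by positivity)
  rw [hQ.deriv]
  -- now the inequality
  set u := 1 - β * c with hu
  set L := -Real.log u with hL
  have hL0 : 0 ≤ L := by
    rw [hL, neg_nonneg]
    exact Real.log_nonpos huc.le (by nlinarith [mul_pos hβ hc])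
  have hlogu : Real.log u = -L := by rw [hL, neg_neg]
  set sq := Real.sqrt (lam * c - c * Real.log u) with hsqdef
  have hsqsq : sq ^ 2 = lam * c - c * Real.log u := Real.sq_sqrt hFc.le
  -- key inequality
  have hBle : β * c / u ^ 2 ≤ ε₀ / (1 - ε₀) ^ 2 := by
    apply div_le_div₀ hε.le hcε (by positivity)
    have : 1 - ε₀ ≤ u := by rw [hu]; linarith
    exact pow_le_pow_left₀ hε1'.le this 2
  have hA : 2 * (β * c / u ^ 2) ≤ lam + L := by linarith
  have hApos : 0 < lam + L := by linarith
  have key : 2 * (lam * c - c * Real.log u) * (β / u + β / u ^ 2) ≤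
      (lam - Real.log u + β * c / u) ^ 2 := by
    rw [hlogu]
    have expand : (lam - -L + β * c / u) ^ 2 - 2 * (lam * c - c * -L) * (β / u + β / u ^ 2)
        = (lam + L) * ((lam + L) - 2 * (β * c / u ^ 2)) + (β * c / u) ^ 2 := by
      field_simp
      ring
    nlinarith [mul_nonneg hApos.le (by linarith : (0:ℝ) ≤ (lam + L) - 2 * (β * c / u ^ 2)),
      sq_nonneg (β * c / u)]
  -- finish
  exact aux_div_nonpos _ _ _ hsqc (by rw [hsqsq]; linarith [key])
end

section
/- Let $R, T, \beta > 0$, $0 < \epsilon_0 < 1$, and $\lambda$ satisfy the concavity condition $\lambda \geq \frac{\epsilon_0}{(1-\epsilon_0)^2} + \left(\frac{\epsilon_0^2}{(1-\epsilon_0)^4} - 2\ln(1-\epsilon_0)\frac{\epsilon_0}{(1-\epsilon_0)^2}\right)^{1/2}$. Define $f(c) = -cRT\ln(1-\beta c)$ and $G(c) = \sqrt{\lambda c - c\ln(1-\beta c)}$. Then for all $a, b$ with $0 < a, b$ and $\beta a \leq \epsilon_0$, $\beta b \leq \epsilon_0$, we have $f(b) - f(a) \leq \big[RT\,G'(a)(2G(a)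 + G'(a)(b-a)) - \lambda RT\big](b - a)$. -/
open Real Set

private noncomputable def st5H (β lam : ℝ) (c : ℝ) : ℝ := lam * c - c * Real.log (1 - β * c)
private noncomputable def st5H1 (β lam : ℝ) (c : ℝ) : ℝ :=
  lam - Real.log (1 - β * c) + β * c / (1 - β * c)
private noncomputable def st5H2 (β : ℝ) (c : ℝ) : ℝ :=
  β / (1 - β * c) + β / (1 - β * c) ^ 2
private noncomputable def st5G1 (β lam : ℝ) (c : ℝ) : ℝ :=
  st5H1 β lam c / (2 * Real.sqrt (st5H β lam c))


private lemma st5_lam_pos (lam ε₀ : ℝ) (hε : 0 < ε₀) (hε1 : ε₀ < 1)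
    (hlam2 : 2 * ε₀ / (1 - ε₀) ^ 2 ≤ lam) : 0 < lam := by
  have h0 : 0 < 1 - ε₀ := by linarith
  have h1 : 0 < 2 * ε₀ / (1 - ε₀) ^ 2 := by positivity
  linarith

private lemma st5_hasDerivAt_H (β lam c : ℝ) (h : β * c < 1) :
    HasDerivAt (st5H β lam) (st5H1 β lam c) c := by
  have hne : (1 : ℝ) - β * c ≠ 0 := ne_of_gt (by linarith)
  have hv : HasDerivAt (fun x : ℝ => 1 - β * x) (-β) c := by
    have := (hasDerivAt_const c (1 : ℝ)).sub ((hasDerivAt_id c).const_mul β)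
    simp only [mul_one, zero_sub] at this
    exact this
  have hlog : HasDerivAt (fun x : ℝ => Real.log (1 - β * x)) (-β / (1 - β * c)) c := hv.log hne
  have hmul : HasDerivAt (fun x : ℝ => x * Real.log (1 - β * x))
      (1 * Real.log (1 - β * c) + c * (-β / (1 - β * c))) c := (hasDerivAt_id c).mul hlog
  have h2 := ((hasDerivAt_id c).const_mul lam).sub hmul
  refine h2.congr_deriv ?_
  unfold st5H1
  field_simp
  ring

private lemma st5_hasDerivAt_H1 (β lam c : ℝ) (h : β * c < 1) :
    HasDerivAt (st5H1 β lam) (st5H2 β c) c := by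
  have hne : (1 : ℝ) - β * c ≠ 0 := ne_of_gt (by linarith)
  have hv : HasDerivAt (fun x : ℝ => 1 - β * x) (-β) c := by
    have := (hasDerivAt_const c (1 : ℝ)).sub ((hasDerivAt_id c).const_mul β)
    simp only [mul_one, zero_sub] at this
    exact this
  have hlog : HasDerivAt (fun x : ℝ => Real.log (1 - β * x)) (-β / (1 - β * c)) c := hv.log hne
  have hnum : HasDerivAt (fun x : ℝ => β * x) β c := by
    simpa using (hasDerivAt_id c).const_mul β
  have hdiv : HasDerivAt (fun x : ℝ => β * x / (1 - β * x))
      ((β * (1 - β * c) - β * c * (-β)) / (1 - β * c) ^ 2) c := hnum.div hv hne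
  have h2 := ((hasDerivAt_const c lam).sub hlog).add hdiv
  refine h2.congr_deriv ?_
  unfold st5H2
  rw [show β * (1 - β * c) - β * c * -β = β by ring]
  ring

private lemma st5_H_pos (β lam c : ℝ) (hlam : 0 < lam) (hβ : 0 < β) (hc : 0 < c)
    (h : β * c < 1) : 0 < st5H β lam c := by
  have hlog : Real.log (1 - β * c) ≤ 0 :=
    Real.log_nonpos (by nlinarith) (by nlinarith)
  unfold st5H
  nlinarith [mul_pos hlam hc, mul_nonneg hc.le (neg_nonneg.2 hlog)]

private lemma st5_hasDerivAt_G (β lam c : ℝ) (hlam : 0 < lam) (hβ : 0 < β) (hc : 0 < c)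
    (h : β * c < 1) :
    HasDerivAt (fun x : ℝ => Real.sqrt (st5H β lam x)) (st5G1 β lam c) c :=
  (st5_hasDerivAt_H β lam c h).sqrt (ne_of_gt (st5_H_pos β lam c hlam hβ hc h))

private lemma st5_hasDerivAt_G1 (β lam c : ℝ) (hlam : 0 < lam) (hβ : 0 < β) (hc : 0 < c)
    (h : β * c < 1) :
    HasDerivAt (st5G1 β lam)
      ((st5H2 β c * (2 * Real.sqrt (st5H β lam c)) -
        st5H1 β lam c * (2 * st5G1 β lam c)) / (2 * Real.sqrt (st5H β lam c)) ^ 2) c := by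
  have hHpos := st5_H_pos β lam c hlam hβ hc h
  have hs : 0 < Real.sqrt (st5H β lam c) := Real.sqrt_pos.2 hHpos
  have hden : HasDerivAt (fun x : ℝ => 2 * Real.sqrt (st5H β lam x)) (2 * st5G1 β lam c) c :=
    (st5_hasDerivAt_G β lam c hlam hβ hc h).const_mul 2
  exact (st5_hasDerivAt_H1 β lam c h).div hden (ne_of_gt (by positivity))

private lemma st5_key (β lam ε₀ c : ℝ) (hβ : 0 < β) (hc : 0 < c) (hε : 0 < ε₀) (hε1 : ε₀ < 1)
    (hcε : β * c ≤ ε₀) (hlam2 : 2 * ε₀ / (1 - ε₀) ^ 2 ≤ lam) :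
    2 * st5H β lam c * st5H2 β c ≤ (st5H1 β lam c) ^ 2 := by
  have hu : 0 < β * c := mul_pos hβ hc
  have hv : 0 < 1 - β * c := by linarith
  have hLlog : Real.log (1 - β * c) ≤ 0 := Real.log_nonpos (by linarith) (by linarith)
  have hlam0 : 0 < lam := st5_lam_pos lam ε₀ hε hε1 hlam2
  have hA : 2 * (β * c) / (1 - β * c) ^ 2 ≤ lam := by
    have h1 : (β * c) / (1 - β * c) ^ 2 ≤ ε₀ / (1 - ε₀) ^ 2 := by
      have h0 : 0 < 1 - ε₀ := by linarith
      apply div_le_div₀ hε.le hcε (by positivity)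
      nlinarith
    calc 2 * (β * c) / (1 - β * c) ^ 2 = 2 * ((β * c) / (1 - β * c) ^ 2) := by ring
      _ ≤ 2 * (ε₀ / (1 - ε₀) ^ 2) := by linarith
      _ = 2 * ε₀ / (1 - ε₀) ^ 2 := by ring
      _ ≤ lam := hlam2
  have hA' : 2 * (β * c) ≤ lam * (1 - β * c) ^ 2 := by
    rw [div_le_iff₀ (by positivity)] at hA; linarith
  unfold st5H st5H1 st5H2
  set v := 1 - β * c with hvdef
  set L := -Real.log v with hLdef
  have hlog : Real.log v = -L := by rw [hLdef, neg_neg]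
  rw [hlog]
  have hL0 : 0 ≤ L := by rw [hLdef]; linarith
  have h2 : 2 * (β * c) ≤ (lam + L) * v ^ 2 := by nlinarith [mul_nonneg hL0 (sq_nonneg v)]
  have hAL : 0 ≤ lam + L := by linarith
  have e1 : 2 * (lam * c - c * (-L)) * (β / v + β / v ^ 2) =
      (2 * (lam + L) * (β * c) * v + 2 * (lam + L) * (β * c)) / v ^ 2 := by
    field_simp
    try ring
  have e2 : (lam - (-L) + β * c / v) ^ 2 = ((lam + L) * v + β * c) ^ 2 / v ^ 2 := by
    field_simp
    try ring
  rw [e1, e2, div_le_div_iff₀ (by positivity) (by positivity)]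
  have h3 : 0 ≤ (lam + L) ^ 2 * v ^ 2 + (β * c) ^ 2 - 2 * (lam + L) * (β * c) := by
    nlinarith [mul_le_mul_of_nonneg_left h2 hAL, sq_nonneg (β * c)]
  nlinarith [mul_nonneg h3 (sq_nonneg v)]

private lemma st5_deriv_nonpos (β lam ε₀ c : ℝ) (hβ : 0 < β) (hc : 0 < c) (hε : 0 < ε₀)
    (hε1 : ε₀ < 1) (hcε : β * c ≤ ε₀) (hlam2 : 2 * ε₀ / (1 - ε₀) ^ 2 ≤ lam) :
    (st5H2 β c * (2 * Real.sqrt (st5H β lam c)) -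
      st5H1 β lam c * (2 * st5G1 β lam c)) / (2 * Real.sqrt (st5H β lam c)) ^ 2 ≤ 0 := by
  have hlam0 : 0 < lam := st5_lam_pos lam ε₀ hε hε1 hlam2
  have hHpos := st5_H_pos β lam c hlam0 hβ hc (lt_of_le_of_lt hcε hε1)
  have hs : 0 < Real.sqrt (st5H β lam c) := Real.sqrt_pos.2 hHpos
  have hs2 : Real.sqrt (st5H β lam c) ^ 2 = st5H β lam c := Real.sq_sqrt hHpos.le
  have key := st5_key β lam ε₀ c hβ hc hε hε1 hcε hlam2
  apply div_nonpos_of_nonpos_of_nonneg _ (sq_nonneg _)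
  have hrw : st5H2 β c * (2 * Real.sqrt (st5H β lam c)) -
      st5H1 β lam c * (2 * st5G1 β lam c) =
      (2 * (Real.sqrt (st5H β lam c)) ^ 2 * st5H2 β c - (st5H1 β lam c) ^ 2) /
        Real.sqrt (st5H β lam c) := by
    unfold st5G1
    field_simp
  rw [hrw]
  apply div_nonpos_of_nonpos_of_nonneg _ hs.le
  rw [hs2]
  linarith

private lemma st5_anti (β lam ε₀ l r : ℝ) (hβ : 0 < β) (hε : 0 < ε₀) (hε1 : ε₀ < 1)
    (hlam2 : 2 * ε₀ / (1 - ε₀) ^ 2 ≤ lam) (hl : 0 < l) (hrε : β * r ≤ ε₀) :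
    AntitoneOn (st5G1 β lam) (Icc l r) := by
  have hlam0 : 0 < lam := st5_lam_pos lam ε₀ hε hε1 hlam2
  have hcond : ∀ x ∈ Icc l r, 0 < x ∧ β * x < 1 := by
    intro x hx
    constructor
    · linarith [hx.1]
    · have : β * x ≤ β * r := by nlinarith [hx.2]
      linarith
  apply antitoneOn_of_deriv_nonpos (convex_Icc l r)
  · intro x hx
    obtain ⟨hx0, hx1⟩ := hcond x hx
    exact (st5_hasDerivAt_G1 β lam x hlam0 hβ hx0 hx1).continuousAt.continuousWithinAt
  · intro x hx
    rw [interior_Icc] at hx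
    obtain ⟨hx0, hx1⟩ := hcond x ⟨hx.1.le, hx.2.le⟩
    exact (st5_hasDerivAt_G1 β lam x hlam0 hβ hx0 hx1).differentiableAt.differentiableWithinAt
  · intro x hx
    rw [interior_Icc] at hx
    obtain ⟨hx0, hx1⟩ := hcond x ⟨hx.1.le, hx.2.le⟩
    have hxε : β * x ≤ ε₀ := by
      have : β * x ≤ β * r := by nlinarith [hx.2]
      linarith
    rw [(st5_hasDerivAt_G1 β lam x hlam0 hβ hx0 hx1).deriv]
    exact st5_deriv_nonpos β lam ε₀ x hβ hx0 hε hε1 hxε hlam2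

private lemma st5_tangent (β lam ε₀ a b : ℝ) (hβ : 0 < β) (hε : 0 < ε₀) (hε1 : ε₀ < 1)
    (hlam2 : 2 * ε₀ / (1 - ε₀) ^ 2 ≤ lam) (ha : 0 < a) (hb : 0 < b)
    (haε : β * a ≤ ε₀) (hbε : β * b ≤ ε₀) :
    Real.sqrt (st5H β lam b) ≤ Real.sqrt (st5H β lam a) + st5G1 β lam a * (b - a) := by
  have hlam0 : 0 < lam := st5_lam_pos lam ε₀ hε hε1 hlam2
  rcases lt_trichotomy a b with hab | hab | hab
  · obtain ⟨ξ, hξ, hslope⟩ := exists_deriv_eq_slope (fun x => Real.sqrt (st5H β lam x)) hab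
      (fun x hx => (st5_hasDerivAt_G β lam x hlam0 hβ (by linarith [hx.1])
        (by nlinarith [hx.2])).continuousAt.continuousWithinAt)
      (fun x hx => (st5_hasDerivAt_G β lam x hlam0 hβ (by linarith [hx.1])
        (by nlinarith [hx.2.le])).differentiableAt.differentiableWithinAt)
    have hξ0 : 0 < ξ := by linarith [hξ.1]
    have hξ1 : β * ξ < 1 := by nlinarith [hξ.2]
    have hd : deriv (fun x => Real.sqrt (st5H β lam x)) ξ = st5G1 β lam ξ :=
      (st5_hasDerivAt_G β lam ξ hlam0 hβ hξ0 hξ1).deriv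
    rw [hd] at hslope
    rw [eq_div_iff (sub_ne_zero.2 hab.ne')] at hslope
    have heq : Real.sqrt (st5H β lam b) - Real.sqrt (st5H β lam a) =
        st5G1 β lam ξ * (b - a) := by linarith [hslope]
    have hanti := st5_anti β lam ε₀ a b hβ hε hε1 hlam2 ha hbε
    have hle : st5G1 β lam ξ ≤ st5G1 β lam a :=
      hanti (left_mem_Icc.2 hab.le) ⟨hξ.1.le, hξ.2.le⟩ hξ.1.le
    have hmul : st5G1 β lam ξ * (b - a) ≤ st5G1 β lam a * (b - a) :=
      mul_le_mul_of_nonneg_right hle (by linarith)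
    linarith [heq, hmul]
  · subst hab; simp
  · obtain ⟨ξ, hξ, hslope⟩ := exists_deriv_eq_slope (fun x => Real.sqrt (st5H β lam x)) hab
      (fun x hx => (st5_hasDerivAt_G β lam x hlam0 hβ (by linarith [hx.1])
        (by nlinarith [hx.2])).continuousAt.continuousWithinAt)
      (fun x hx => (st5_hasDerivAt_G β lam x hlam0 hβ (by linarith [hx.1])
        (by nlinarith [hx.2.le])).differentiableAt.differentiableWithinAt)
    have hξ0 : 0 < ξ := by linarith [hξ.1]
    have hξ1 : β * ξ < 1 := by nlinarith [hξ.2]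
    have hd : deriv (fun x => Real.sqrt (st5H β lam x)) ξ = st5G1 β lam ξ :=
      (st5_hasDerivAt_G β lam ξ hlam0 hβ hξ0 hξ1).deriv
    rw [hd] at hslope
    rw [eq_div_iff (sub_ne_zero.2 hab.ne')] at hslope
    have heq : Real.sqrt (st5H β lam a) - Real.sqrt (st5H β lam b) =
        st5G1 β lam ξ * (a - b) := by linarith [hslope]
    have hanti := st5_anti β lam ε₀ b a hβ hε hε1 hlam2 hb haε
    have heq2 : Real.sqrt (st5H β lam b) - Real.sqrt (st5H β lam a) =
        st5G1 β lam ξ * (b - a) := by linear_combination -heq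
    have hle : st5G1 β lam a ≤ st5G1 β lam ξ :=
      hanti ⟨hξ.1.le, hξ.2.le⟩ (right_mem_Icc.2 hab.le) hξ.2.le
    have hmul : st5G1 β lam ξ * (b - a) ≤ st5G1 β lam a * (b - a) :=
      mul_le_mul_of_nonpos_right hle (by linarith)
    linarith [heq2, hmul]

theorem stmt_5 (R T β ε₀ lam : ℝ) (hR : 0 < R) (hT : 0 < T) (hβ : 0 < β)
    (hε : 0 < ε₀) (hε1 : ε₀ < 1)
    (hlam : lam ≥ ε₀ / (1 - ε₀) ^ 2 +
      Real.sqrt (ε₀ ^ 2 / (1 - ε₀) ^ 4 - 2 * Real.log (1 - ε₀) * (ε₀ / (1 - ε₀) ^ 2)))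
    (G f : ℝ → ℝ)
    (hG : G = fun c : ℝ => Real.sqrt (lam * c - c * Real.log (1 - β * c)))
    (hf : f = fun c : ℝ => -(c * R * T * Real.log (1 - β * c)))
    (a b : ℝ) (ha : 0 < a) (hb : 0 < b) (haε : β * a ≤ ε₀) (hbε : β * b ≤ ε₀) :
    f b - f a ≤
      (R * T * deriv G a * (2 * G a + deriv G a * (b - a)) - lam * R * T) * (b - a) := by
  -- `lam ≥ 2 ε₀ / (1-ε₀)^2`
  have hloge : Real.log (1 - ε₀) < 0 := Real.log_neg (by linarith) (by linarith)
  have hsqrt : ε₀ / (1 - ε₀) ^ 2 ≤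
      Real.sqrt (ε₀ ^ 2 / (1 - ε₀) ^ 4 - 2 * Real.log (1 - ε₀) * (ε₀ / (1 - ε₀) ^ 2)) := by
    have h1 : ε₀ ^ 2 / (1 - ε₀) ^ 4 ≤
        ε₀ ^ 2 / (1 - ε₀) ^ 4 - 2 * Real.log (1 - ε₀) * (ε₀ / (1 - ε₀) ^ 2) := by
      have : 2 * Real.log (1 - ε₀) * (ε₀ / (1 - ε₀) ^ 2) ≤ 0 := by
        apply mul_nonpos_of_nonpos_of_nonneg (by linarith) (by positivity)
      linarith
    calc ε₀ / (1 - ε₀) ^ 2 = Real.sqrt ((ε₀ / (1 - ε₀) ^ 2) ^ 2) := by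
          rw [Real.sqrt_sq (by positivity)]
      _ = Real.sqrt (ε₀ ^ 2 / (1 - ε₀) ^ 4) := by rw [div_pow]; ring_nf
      _ ≤ _ := Real.sqrt_le_sqrt h1
  have hlam2 : 2 * ε₀ / (1 - ε₀) ^ 2 ≤ lam := by
    have h2e : 2 * ε₀ / (1 - ε₀) ^ 2 = ε₀ / (1 - ε₀) ^ 2 + ε₀ / (1 - ε₀) ^ 2 := by ring
    rw [h2e]
    linarith [hsqrt, hlam]
  have hlam0 : 0 < lam := st5_lam_pos lam ε₀ hε hε1 hlam2
  subst hG hf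
  have hd : deriv (fun c : ℝ => Real.sqrt (lam * c - c * Real.log (1 - β * c))) a =
      st5G1 β lam a :=
    (st5_hasDerivAt_G β lam a hlam0 hβ ha (lt_of_le_of_lt haε hε1)).deriv
  rw [hd]
  have hHa : 0 < st5H β lam a := st5_H_pos β lam a hlam0 hβ ha (lt_of_le_of_lt haε hε1)
  have hHb : 0 < st5H β lam b := st5_H_pos β lam b hlam0 hβ hb (lt_of_le_of_lt hbε hε1)
  have h2a : Real.sqrt (st5H β lam a) ^ 2 = st5H β lam a := Real.sq_sqrt hHa.le
  have h2b : Real.sqrt (st5H β lam b) ^ 2 = st5H β lam b := Real.sq_sqrt hHb.le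
  have tangent := st5_tangent β lam ε₀ a b hβ hε hε1 hlam2 ha hb haε hbε
  have hsq : Real.sqrt (st5H β lam b) ^ 2 ≤
      (Real.sqrt (st5H β lam a) + st5G1 β lam a * (b - a)) ^ 2 :=
    pow_le_pow_left₀ (Real.sqrt_nonneg _) tangent 2
  have key : st5H β lam b - st5H β lam a ≤
      (Real.sqrt (st5H β lam a) + st5G1 β lam a * (b - a)) ^ 2 -
        Real.sqrt (st5H β lam a) ^ 2 := by
    rw [h2b] at hsq
    linarith
  have hRT : (0:ℝ) < R * T := mul_pos hR hT
  have key2 : R * T * ((lam * b - b * Real.log (1 - β * b)) -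
      (lam * a - a * Real.log (1 - β * a))) ≤
      R * T * ((Real.sqrt (lam * a - a * Real.log (1 - β * a)) +
        st5G1 β lam a * (b - a)) ^ 2 -
        Real.sqrt (lam * a - a * Real.log (1 - β * a)) ^ 2) :=
    mul_le_mul_of_nonneg_left key hRT.le
  beta_reduce
  nlinarith [key2]
end

section
/- Let $\alpha, \beta > 0$ and define $f(c) = \frac{\alpha c}{2\sqrt{2}\beta}\ln\left(\frac{1 + (1-\sqrt{2})\beta c}{1 + (1+\sqrt{2})\beta c}\right)$ on $c > 0$ (where $1 + (1-\sqrt{2})\beta c > 0$). Then $f$ is concave, i.e., $f''(c) \leq 0$ wherever defined with $1 + (1-\sqrt{2})\beta c > 0$. -/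
theorem stmt_6 (α β : ℝ) (hα : 0 < α) (hβ : 0 < β) (c : ℝ) (hc : 0 < c)
    (hdom : 0 < 1 + (1 - Real.sqrt 2) * β * c) :
    deriv (deriv (fun x : ℝ => α * x / (2 * Real.sqrt 2 * β) *
      Real.log ((1 + (1 - Real.sqrt 2) * β * x) / (1 + (1 + Real.sqrt 2) * β * x)))) c ≤ 0 := by
  set t := Real.sqrt 2 with ht_def
  have ht1 : 1 < t := by
    rw [ht_def]
    nlinarith [Real.sq_sqrt (by norm_num : (2:ℝ) ≥ 0), Real.sqrt_nonneg 2]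
  have ht0 : 0 < t := by linarith
  set A : ℝ := (1 - t) * β with hA_def
  set B : ℝ := (1 + t) * β with hB_def
  have hBpos : 0 < B := by
    have : 0 < 1 + t := by linarith
    positivity
  -- eventual positivity of denominators
  have hU : ∀ᶠ x in nhds c, 0 < 1 + A * x := by
    have hcont : ContinuousAt (fun x : ℝ => 1 + A * x) c := by fun_prop
    exact continuousAt_const.eventually_lt hcont (by simpa using hdom)
  have hV : ∀ᶠ x in nhds c, 0 < 1 + B * x := by
    have hcont : ContinuousAt (fun x : ℝ => 1 + B * x) c := by fun_prop
    have h0 : (0:ℝ) < 1 + B * c := by positivity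
    exact continuousAt_const.eventually_lt hcont h0
  set f1 : ℝ → ℝ := fun x => α * x / (2 * t * β) *
      (Real.log (1 + A * x) - Real.log (1 + B * x)) with hf1_def
  set F : ℝ → ℝ := fun x => α / (2 * t * β) *
      (Real.log (1 + A * x) - Real.log (1 + B * x)) +
      α * x / (2 * t * β) * (A / (1 + A * x) - B / (1 + B * x)) with hF_def
  -- f = f1 eventually
  have heq : (fun x : ℝ => α * x / (2 * t * β) *
      Real.log ((1 + A * x) / (1 + B * x))) =ᶠ[nhds c] f1 := by
    filter_upwards [hU, hV] with x hx1 hx2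
    rw [hf1_def]
    simp only
    rw [Real.log_div hx1.ne' hx2.ne']
  -- derivative of f1 at points in domain
  have hlin1 : ∀ x : ℝ, HasDerivAt (fun x => 1 + A * x) A x := by
    intro x
    simpa using ((hasDerivAt_id x).const_mul A).const_add 1
  have hlin2 : ∀ x : ℝ, HasDerivAt (fun x => 1 + B * x) B x := by
    intro x
    simpa using ((hasDerivAt_id x).const_mul B).const_add 1
  have h0 : ∀ x : ℝ, HasDerivAt (fun x => α * x / (2 * t * β)) (α / (2 * t * β)) x := by
    intro x
    have := ((hasDerivAt_id x).const_mul α).div_const (2 * t * β)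
    simpa using this
  have hderiv1 : ∀ x : ℝ, 0 < 1 + A * x → 0 < 1 + B * x → HasDerivAt f1 (F x) x := by
    intro x hx1 hx2
    have hlog1 : HasDerivAt (fun x => Real.log (1 + A * x)) (A / (1 + A * x)) x :=
      (hlin1 x).log hx1.ne'
    have hlog2 : HasDerivAt (fun x => Real.log (1 + B * x)) (B / (1 + B * x)) x :=
      (hlin2 x).log hx2.ne'
    exact (h0 x).mul (hlog1.sub hlog2)
  have hF : deriv f1 =ᶠ[nhds c] F := by
    filter_upwards [hU, hV] with x hx1 hx2
    exact (hderiv1 x hx1 hx2).deriv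
  have hdF : deriv (fun x : ℝ => α * x / (2 * t * β) *
      Real.log ((1 + A * x) / (1 + B * x))) =ᶠ[nhds c] F := heq.deriv.trans hF
  rw [hdF.deriv_eq]
  -- derivative of F at c
  have hu : 0 < 1 + A * c := hdom
  have hv : 0 < 1 + B * c := by positivity
  have hlog1 : HasDerivAt (fun x => Real.log (1 + A * x)) (A / (1 + A * c)) c :=
    (hlin1 c).log hu.ne'
  have hlog2 : HasDerivAt (fun x => Real.log (1 + B * x)) (B / (1 + B * c)) c :=
    (hlin2 c).log hv.ne'
  have hdiv1 : HasDerivAt (fun x => A / (1 + A * x))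
      ((0 * (1 + A * c) - A * A) / (1 + A * c) ^ 2) c :=
    (hasDerivAt_const c A).div (hlin1 c) hu.ne'
  have hdiv2 : HasDerivAt (fun x => B / (1 + B * x))
      ((0 * (1 + B * c) - B * B) / (1 + B * c) ^ 2) c :=
    (hasDerivAt_const c B).div (hlin2 c) hv.ne'
  set D : ℝ := α / (2 * t * β) * (A / (1 + A * c) - B / (1 + B * c)) +
      (α / (2 * t * β) * (A / (1 + A * c) - B / (1 + B * c)) +
        α * c / (2 * t * β) * ((0 * (1 + A * c) - A * A) / (1 + A * c) ^ 2 -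
          (0 * (1 + B * c) - B * B) / (1 + B * c) ^ 2)) with hD_def
  have hFd : HasDerivAt F D c := by
    have h1 : HasDerivAt (fun x => α / (2 * t * β) *
        (Real.log (1 + A * x) - Real.log (1 + B * x)))
        (α / (2 * t * β) * (A / (1 + A * c) - B / (1 + B * c))) c :=
      (hlog1.sub hlog2).const_mul _
    have h2 := (h0 c).mul (hdiv1.sub hdiv2)
    exact h1.add h2
  rw [hFd.deriv]
  -- final algebraic inequality
  set u : ℝ := 1 + A * c with hu_def
  set v : ℝ := 1 + B * c with hv_def
  have hKpos : 0 < α / (2 * t * β) := by positivity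
  have hrw : D = α / (2 * t * β) *
      (2 * (A * v - B * u) * (u * v) + c * (B ^ 2 * u ^ 2 - A ^ 2 * v ^ 2)) /
      (u ^ 2 * v ^ 2) := by
    rw [hD_def]
    field_simp
    ring
  have hnum : 2 * (A * v - B * u) * (u * v) + c * (B ^ 2 * u ^ 2 - A ^ 2 * v ^ 2) =
      -(4 * t * β * (1 + β * c)) := by
    rw [hu_def, hv_def, hA_def, hB_def]
    ring
  rw [hrw, hnum]
  apply div_nonpos_of_nonpos_of_nonneg
  · apply mul_nonpos_of_nonneg_of_nonpos hKpos.le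
    have : 0 < 4 * t * β * (1 + β * c) := by positivity
    linarith
  · positivity
end
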